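/- Let d ∈ ℕ. The matrix p_{mub,d}, indexed by [d+1]×[d] (so N = d(d+1)), is a matricially spanning quantum correlation of dimension d if and only if there exist d+1 projection-valued measures {P_{1,i}}_{i=1}^{d}, …, {P_{d+1,i}}_{i=1}^{d} in M_d(ℂ) whose corresponding bases are mutually unbiased, i.e., each P_{x,i} is a rank-one projection with ∑_{i=1}^{d} P_{x,i} = I_d for every x ∈ [d+1], and Tr(P_{x,i} P_{y,j}) = 1/d whenever x ≠ y. -/

import Mathlib

/-- `p` is a matricially spanning quantum correlation of dimension `d` (with question set
indexed by `ι`): there are projections `P_x ∈ M_d(ℂ)`, `x ∈ ι`, spanning `M_d(ℂ)` with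
`p x y = (1/d)·Tr(P_x P_y)`. -/
def IsMatSpanning (ι : Type) (d : ℕ) (p : ι → ι → ℂ) : Prop :=
  ∃ P : ι → Matrix (Fin d) (Fin d) ℂ,
    (∀ x, (P x).IsHermitian ∧ P x * P x = P x) ∧
    Submodule.span ℂ (Set.range P) = ⊤ ∧
    (∀ x y, p x y = (1 / (d : ℂ)) * (P x * P y).trace)

/-- The correlation `p_{mub,d}` on `([d+1]×[d]) × ([d+1]×[d])`: `1/d` if `(x,i) = (y,j)`,
`0` if `x = y` and `i ≠ j`, and `1/d²` if `x ≠ y`. -/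
noncomputable def pMUB (d : ℕ) : (Fin (d + 1) × Fin d) → (Fin (d + 1) × Fin d) → ℂ :=
  fun a b => if a = b then 1 / (d : ℂ) else if a.1 = b.1 then 0 else 1 / (d : ℂ) ^ 2



open Matrix in
lemma herm_idem_trace_eq_rank {n : ℕ} {A : Matrix (Fin n) (Fin n) ℂ}
    (hA : A.IsHermitian) (h2 : A * A = A) : A.trace = (A.rank : ℂ) := by
  classical
  set U : Matrix (Fin n) (Fin n) ℂ := (hA.eigenvectorUnitary : Matrix (Fin n) (Fin n) ℂ) with hU
  set D : Matrix (Fin n) (Fin n) ℂ := diagonal ((↑) ∘ hA.eigenvalues : Fin n → ℂ) with hDdef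
  have hUU : star U * U = 1 := Unitary.coe_star_mul_self hA.eigenvectorUnitary
  have hUU' : U * star U = 1 := Unitary.coe_mul_star_self hA.eigenvectorUnitary
  have hdiag : star U * A * U = D := by
    have := hA.conjStarAlgAut_star_eigenvectorUnitary
    rw [Unitary.conjStarAlgAut_star_apply] at this
    exact this
  -- eigenvalues are 0 or 1
  have hev : ∀ i, hA.eigenvalues i = 0 ∨ hA.eigenvalues i = 1 := by
    intro i
    have hD : D * D = D := by
      rw [← hdiag]
      calc star U * A * U * (star U * A * U) = star U * (A * (U * star U) * A) * U := by
            noncomm_ring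
        _ = star U * A * U := by rw [hUU', mul_one, h2]
    rw [hDdef, diagonal_mul_diagonal] at hD
    have := congrArg (fun M => M i i) hD
    simp only [diagonal_apply_eq, Pi.mul_apply, Function.comp_apply] at this
    have h4 : hA.eigenvalues i * hA.eigenvalues i = hA.eigenvalues i := by
      exact_mod_cast this
    have h5 : hA.eigenvalues i * (hA.eigenvalues i - 1) = 0 := by ring_nf; linarith [h4]
    rcases mul_eq_zero.mp h5 with h | h
    · exact Or.inl h
    · exact Or.inr (by linarith)
  -- trace = sum of eigenvalues
  have htr : A.trace = ∑ i, (hA.eigenvalues i : ℂ) := by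
    conv_lhs => rw [hA.spectral_theorem]
    rw [Unitary.conjStarAlgAut_apply]
    rw [show ((hA.eigenvectorUnitary : Matrix (Fin n) (Fin n) ℂ) *
        diagonal (RCLike.ofReal ∘ hA.eigenvalues) *
        star (hA.eigenvectorUnitary : Matrix (Fin n) (Fin n) ℂ)) = U * D * star U from rfl]
    rw [trace_mul_cycle, hUU, one_mul, hDdef, trace_diagonal]
    rfl
  -- rank = number of nonzero eigenvalues
  have hrk : A.rank = Fintype.card {i // hA.eigenvalues i ≠ 0} := hA.rank_eq_card_non_zero_eigs
  rw [htr, hrk, Fintype.card_subtype]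
  rw [Finset.card_eq_sum_ones]
  push_cast
  rw [Finset.sum_filter]
  apply Finset.sum_congr rfl
  intro i _
  rcases hev i with h | h <;> simp [h]

open Matrix in
lemma trace_conjT_mul (n : ℕ) (A : Matrix (Fin n) (Fin n) ℂ) :
    (Aᴴ * A).trace = ((∑ i, ∑ j, Complex.normSq (A i j) : ℝ) : ℂ) := by
  rw [Matrix.trace]
  push_cast
  rw [Finset.sum_comm]
  apply Finset.sum_congr rfl
  intro j _
  rw [Matrix.diag_apply, Matrix.mul_apply]
  apply Finset.sum_congr rfl
  intro i _
  rw [Matrix.conjTranspose_apply, Complex.normSq_eq_conj_mul_self]; rfl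

open Matrix in
lemma eq_zero_of_trace_conjT_mul (n : ℕ) (A : Matrix (Fin n) (Fin n) ℂ)
    (h : (Aᴴ * A).trace = 0) : A = 0 := by
  rw [trace_conjT_mul] at h
  have h' : (∑ i, ∑ j, Complex.normSq (A i j) : ℝ) = 0 := by exact_mod_cast h
  ext i j
  have h1 : ∀ i ∈ Finset.univ, (0:ℝ) ≤ ∑ j, Complex.normSq (A i j) :=
    fun i _ => Finset.sum_nonneg fun j _ => Complex.normSq_nonneg _
  have h2 := (Finset.sum_eq_zero_iff_of_nonneg h1).mp h' i (Finset.mem_univ i)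
  have h3 := (Finset.sum_eq_zero_iff_of_nonneg
    (fun j _ => Complex.normSq_nonneg (A i j))).mp h2 j (Finset.mem_univ j)
  simpa using Complex.normSq_eq_zero.mp h3

open Matrix in
lemma herm_idem_mul_eq_zero {n : ℕ} {P Q : Matrix (Fin n) (Fin n) ℂ}
    (hP : P.IsHermitian) (hP2 : P * P = P) (hQ : Q.IsHermitian) (hQ2 : Q * Q = Q)
    (h : (P * Q).trace = 0) : P * Q = 0 := by
  have key : ((Q * P)ᴴ * (Q * P)).trace = (P * Q).trace := by
    rw [conjTranspose_mul, hP.eq, hQ.eq]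
    have h1 : P * Q * (Q * P) = P * (Q * Q) * P := by noncomm_ring
    rw [h1, hQ2, trace_mul_cycle, hP2]
  have hQP : Q * P = 0 := eq_zero_of_trace_conjT_mul _ _ (by rw [key, h])
  have h2 : (Q * P)ᴴ = P * Q := by rw [conjTranspose_mul, hP.eq, hQ.eq]
  rw [← h2, hQP, conjTranspose_zero]

open Matrix in
lemma forward_dir {n : ℕ}
    (P : (Fin (n + 1 + 1) × Fin (n + 1)) → Matrix (Fin (n + 1)) (Fin (n + 1)) ℂ)
    (hproj : ∀ x, (P x).IsHermitian ∧ P x * P x = P x)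
    (hp : ∀ x y, pMUB (n + 1) x y = (1 / ((n + 1 : ℕ) : ℂ)) * (P x * P y).trace) :
    (∀ x i, (P (x, i)).IsHermitian ∧ P (x, i) * P (x, i) = P (x, i) ∧ (P (x, i)).rank = 1) ∧
    (∀ x : Fin (n + 1 + 1), ∑ i, P (x, i) = 1) ∧
    (∀ x y i j, x ≠ y → (P (x, i) * P (y, j)).trace = 1 / ((n + 1 : ℕ) : ℂ)) := by
  have hd : ((n + 1 : ℕ) : ℂ) ≠ 0 := Nat.cast_ne_zero.mpr (Nat.succ_ne_zero n)
  have hd' : (1 : ℂ) / ((n + 1 : ℕ) : ℂ) ≠ 0 := one_div_ne_zero hd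
  have htr : ∀ a, (P a).trace = 1 := by
    intro a
    have h := hp a a
    simp only [pMUB, eq_self_iff_true, if_true] at h
    have h2' : (1:ℂ)/((n+1:ℕ):ℂ) * 1 = (1:ℂ)/((n+1:ℕ):ℂ) * (P a * P a).trace := by
      rw [mul_one]; exact h
    have h2 : (P a * P a).trace = 1 := (mul_left_cancel₀ hd' h2').symm
    rwa [(hproj a).2] at h2
  have hrank : ∀ a, (P a).rank = 1 := by
    intro a
    have h := herm_idem_trace_eq_rank (hproj a).1 (hproj a).2
    rw [htr a] at h
    exact_mod_cast h.symm
  have horth : ∀ x i j, i ≠ j → P (x, i) * P (x, j) = 0 := by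
    intro x i j hij
    have h := hp (x, i) (x, j)
    have hne : ((x, i) : Fin (n+1+1) × Fin (n+1)) ≠ (x, j) := by
      simp [Prod.ext_iff, hij]
    simp only [pMUB, if_neg hne, if_pos rfl] at h
    have htr0 : (P (x, i) * P (x, j)).trace = 0 := by
      rcases mul_eq_zero.mp h.symm with h' | h'
      · exact absurd h' hd'
      · exact h'
    exact herm_idem_mul_eq_zero (hproj _).1 (hproj _).2 (hproj _).1 (hproj _).2 htr0
  refine ⟨fun x i => ⟨(hproj _).1, (hproj _).2, hrank _⟩, ?_, ?_⟩
  · intro x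
    set S : Matrix (Fin (n+1)) (Fin (n+1)) ℂ := ∑ i, P (x, i) with hS
    have hSh : Sᴴ = S := by
      rw [hS, conjTranspose_sum]
      exact Finset.sum_congr rfl fun i _ => (hproj _).1.eq
    have hS2 : S * S = S := by
      rw [hS, Finset.sum_mul_sum]
      apply Finset.sum_congr rfl
      intro i _
      rw [Finset.sum_eq_single i (fun j _ hj => horth x i j (Ne.symm hj))
        (fun h => absurd (Finset.mem_univ i) h), (hproj _).2]
    have hStr : S.trace = ((n + 1 : ℕ) : ℂ) := by
      rw [hS, trace_sum]
      simp [htr]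
    have hR2 : (1 - S) * (1 - S) = 1 - S := by
      have h1 : (1 - S) * (1 - S) = 1 - S - S + S * S := by noncomm_ring
      rw [h1, hS2]; abel
    have hRtr : (1 - S).trace = 0 := by
      rw [trace_sub, hStr, trace_one]
      simp
    have hRh : (1 - S)ᴴ = 1 - S := by rw [conjTranspose_sub, hSh, conjTranspose_one]
    have hR0 : (1 : Matrix (Fin (n+1)) (Fin (n+1)) ℂ) - S = 0 := by
      apply eq_zero_of_trace_conjT_mul
      rw [hRh, hR2, hRtr]
    exact (sub_eq_zero.mp hR0).symm
  · intro x y i j hxy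
    have h := hp (x, i) (y, j)
    have hne : ((x, i) : Fin (n+1+1) × Fin (n+1)) ≠ (y, j) := by
      simp [Prod.ext_iff]; intro h'; exact absurd h' hxy
    simp only [pMUB, if_neg hne, if_neg hxy] at h
    have hc : ((n : ℂ) + 1) ≠ 0 := by push_cast at hd; exact hd
    push_cast at h ⊢
    have h2 : ((n:ℂ)+1) * ((1/((n:ℂ)+1)) * (P (x,i) * P (y,j)).trace)
        = (P (x,i) * P (y,j)).trace := by
      rw [← mul_assoc, mul_one_div, div_self hc, one_mul]
    rw [← h2, ← h, pow_two, one_div, mul_inv, ← mul_assoc, mul_inv_cancel₀ hc, one_mul, one_div]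

open Matrix in
lemma herm_idem_trace_mul_eq {n : ℕ} {P Q : Matrix (Fin n) (Fin n) ℂ}
    (hP : P.IsHermitian) (hP2 : P * P = P) (hQ : Q.IsHermitian) (hQ2 : Q * Q = Q) :
    ((Q * P)ᴴ * (Q * P)).trace = (P * Q).trace := by
  rw [conjTranspose_mul, hP.eq, hQ.eq]
  have h1 : P * Q * (Q * P) = P * (Q * Q) * P := by noncomm_ring
  rw [h1, hQ2, trace_mul_cycle, hP2]

open Matrix in
lemma backward_facts {n : ℕ}
    (P : Fin (n + 1 + 1) → Fin (n + 1) → Matrix (Fin (n + 1)) (Fin (n + 1)) ℂ)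
    (h1 : ∀ x i, (P x i).IsHermitian ∧ P x i * P x i = P x i ∧ (P x i).rank = 1)
    (hsum : ∀ x, ∑ i, P x i = 1) :
    (∀ x i, (P x i).trace = 1) ∧ (∀ x i j, i ≠ j → (P x i * P x j).trace = 0) := by
  have htr : ∀ x i, (P x i).trace = 1 := by
    intro x i
    have h := herm_idem_trace_eq_rank (h1 x i).1 (h1 x i).2.1
    rw [(h1 x i).2.2] at h
    simpa using h
  refine ⟨htr, ?_⟩
  intro x i j hij
  set f : Fin (n + 1) → ℝ :=
    fun j => ∑ a, ∑ b, Complex.normSq ((P x j * P x i) a b) with hf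
  have hft : ∀ j, (P x i * P x j).trace = ((f j : ℝ) : ℂ) := by
    intro j
    rw [← herm_idem_trace_mul_eq (h1 x i).1 (h1 x i).2.1 (h1 x j).1 (h1 x j).2.1,
      trace_conjT_mul]
  have hsumt : ∑ j, (P x i * P x j).trace = 1 := by
    rw [← trace_sum, ← Finset.mul_sum, hsum x, mul_one, htr x i]
  have hfsum : ∑ j, f j = 1 := by
    have : ((∑ j, f j : ℝ) : ℂ) = ((1 : ℝ) : ℂ) := by
      push_cast
      rw [← hsumt]
      exact Finset.sum_congr rfl fun j _ => (hft j).symm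
    exact_mod_cast this
  have hfi : f i = 1 := by
    have : ((f i : ℝ) : ℂ) = ((1:ℝ) : ℂ) := by
      rw [← hft i, (h1 x i).2.1, htr x i]; norm_num
    exact_mod_cast this
  have herase : ∑ j ∈ Finset.univ.erase i, f j = 0 := by
    rw [Finset.sum_erase_eq_sub (Finset.mem_univ i), hfsum, hfi, sub_self]
  have hnonneg : ∀ j ∈ Finset.univ.erase i, (0:ℝ) ≤ f j :=
    fun j _ => Finset.sum_nonneg fun a _ => Finset.sum_nonneg fun b _ => Complex.normSq_nonneg _
  have hfj : f j = 0 := (Finset.sum_eq_zero_iff_of_nonneg hnonneg).mp herase j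
    (Finset.mem_erase.mpr ⟨Ne.symm hij, Finset.mem_univ j⟩)
  rw [hft j, hfj]
  norm_num

open Matrix in
lemma span_top {n : ℕ}
    (P : Fin (n + 1 + 1) → Fin (n + 1) → Matrix (Fin (n + 1)) (Fin (n + 1)) ℂ)
    (htr : ∀ x i, (P x i).trace = 1)
    (hsum : ∀ x, ∑ i, P x i = 1)
    (horth : ∀ x i j, i ≠ j → (P x i * P x j).trace = 0)
    (hii : ∀ x i, (P x i * P x i).trace = 1)
    (hcross : ∀ x y i j, x ≠ y → (P x i * P y j).trace = 1 / (((n + 1 : ℕ)) : ℂ)) :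
    Submodule.span ℂ (Set.range fun a : Fin (n + 1 + 1) × Fin (n + 1) => P a.1 a.2) = ⊤ := by
  classical
  set d : ℂ := (n : ℂ) + 1 with hd
  have hc : d ≠ 0 := by
    rw [hd, show ((n : ℂ) + 1) = ((n + 1 : ℕ) : ℂ) by push_cast; ring]
    exact Nat.cast_ne_zero.mpr (Nat.succ_ne_zero n)
  set b : Option (Fin (n + 1 + 1) × Fin n) → Matrix (Fin (n + 1)) (Fin (n + 1)) ℂ :=
    fun o => o.elim 1 (fun a => P a.1 a.2.castSucc - (1 / d) • 1) with hb
  have hcast : ((n + 1 : ℕ) : ℂ) = d := by rw [hd]; push_cast; ring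
  have htrone : (1 : Matrix (Fin (n + 1)) (Fin (n + 1)) ℂ).trace = d := by
    rw [trace_one, ← hcast]; simp
  have expand : ∀ A B : Matrix (Fin (n + 1)) (Fin (n + 1)) ℂ, A.trace = 1 → B.trace = 1 →
      ((A - (1 / d) • 1) * (B - (1 / d) • 1)).trace = (A * B).trace - 1 / d := by
    intro A B hA hB
    have hmul : (A - (1 / d) • 1) * (B - (1 / d) • 1)
        = A * B - (1 / d) • B - (1 / d) • A + ((1 / d) * (1 / d)) • 1 := by
      simp only [sub_mul, mul_sub, smul_mul_assoc, mul_smul_comm, one_mul, mul_one, smul_smul,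
        smul_sub]
      abel
    rw [hmul, trace_add, trace_sub, trace_sub, trace_smul, trace_smul, trace_smul, hA, hB,
      htrone]
    simp only [smul_eq_mul, mul_one]
    field_simp
    ring
  have hval : ∀ (x : Fin (n + 1 + 1)) (i : Fin n) (y : Fin (n + 1 + 1)) (j0 : Fin (n + 1)),
      ((P x i.castSucc - (1 / d) • 1) * (P y j0 - (1 / d) • 1)).trace
        = if x = y then ((if i.castSucc = j0 then (1 : ℂ) else 0) - 1 / d) else 0 := by
    intro x i y j0
    rw [expand _ _ (htr _ _) (htr _ _)]
    by_cases hxy : x = y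
    · subst hxy
      rw [if_pos rfl]
      by_cases hij : i.castSucc = j0
      · subst hij
        rw [hii, if_pos rfl]
      · rw [horth x _ _ hij, if_neg hij]
    · rw [if_neg hxy, hcross x y _ _ hxy, hcast, sub_self]
  have li : LinearIndependent ℂ b := by
    rw [Fintype.linearIndependent_iff]
    intro g hg
    have key : ∀ (y : Fin (n + 1 + 1)) (j0 : Fin (n + 1)),
        ∑ i : Fin n, g (some (y, i)) * ((if i.castSucc = j0 then (1 : ℂ) else 0) - 1 / d)
          = 0 := by
      intro y j0
      have h0 : (∑ k, g k • b k) * (P y j0 - (1 / d) • 1) = 0 := by rw [hg, zero_mul]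
      rw [Finset.sum_mul] at h0
      have h1 := congrArg Matrix.trace h0
      rw [trace_sum, trace_zero] at h1
      simp only [smul_mul_assoc, trace_smul, smul_eq_mul, hb] at h1
      rw [Fintype.sum_option] at h1
      simp only [Option.elim_none, Option.elim_some] at h1
      have hnone : ((1 : Matrix (Fin (n + 1)) (Fin (n + 1)) ℂ) *
          (P y j0 - (1 / d) • 1)).trace = 0 := by
        rw [one_mul, trace_sub, trace_smul, htrone, htr, smul_eq_mul]
        field_simp
        ring
      rw [hnone, mul_zero, zero_add, Fintype.sum_prod_type] at h1
      dsimp only at h1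
      simp only [hval] at h1
      rw [Finset.sum_eq_single y
        (fun x _ hxy => Finset.sum_eq_zero fun i _ => by rw [if_neg hxy, mul_zero])
        (fun hy => absurd (Finset.mem_univ y) hy)] at h1
      simp only [eq_self_iff_true, if_true] at h1
      exact h1
    have hsome : ∀ (y : Fin (n + 1 + 1)) (i0 : Fin n), g (some (y, i0)) = 0 := by
      intro y i0
      have hs0 : ∑ i : Fin n, g (some (y, i)) = 0 := by
        have hk := key y (Fin.last n)
        have hnolast : ∀ i : Fin n, i.castSucc ≠ Fin.last n := fun i =>
          Fin.ne_of_lt (Fin.castSucc_lt_last i)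
        simp only [if_neg (hnolast _), zero_sub, mul_neg, Finset.sum_neg_distrib] at hk
        have h2 : (∑ i : Fin n, g (some (y, i))) * (1 / d) = 0 := by
          rw [Finset.sum_mul]
          exact neg_eq_zero.mp hk
        rcases mul_eq_zero.mp h2 with h | h
        · exact h
        · exact absurd h (one_div_ne_zero hc)
      have hk := key y i0.castSucc
      simp only [mul_sub, Finset.sum_sub_distrib, Fin.castSucc_inj, mul_ite, mul_one,
        mul_zero] at hk
      rw [Finset.sum_ite_eq' Finset.univ i0 (fun i => g (some (y, i)))] at hk
      rw [if_pos (Finset.mem_univ i0), ← Finset.sum_mul, hs0, zero_mul, sub_zero] at hk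
      exact hk
    have hnone : g none = 0 := by
      have h1 := congrArg Matrix.trace hg
      rw [trace_sum, trace_zero] at h1
      simp only [trace_smul, smul_eq_mul] at h1
      rw [Fintype.sum_option] at h1
      have hz : ∀ a : Fin (n + 1 + 1) × Fin n, g (some a) * (b (some a)).trace = 0 := by
        intro a
        rw [hsome a.1 a.2, zero_mul]
      rw [Finset.sum_congr rfl (fun a _ => hz a), Finset.sum_const, smul_zero, add_zero] at h1
      have hbt : (b none).trace = d := htrone
      rw [hbt] at h1
      rcases mul_eq_zero.mp h1 with h | h
      · exact h
      · exact absurd h hc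
    intro k
    rcases k with _ | a
    · exact hnone
    · exact hsome a.1 a.2
  have hcard : Fintype.card (Option (Fin (n + 1 + 1) × Fin n))
      = Module.finrank ℂ (Matrix (Fin (n + 1)) (Fin (n + 1)) ℂ) := by
    rw [Module.finrank_matrix]
    simp only [Fintype.card_option, Fintype.card_prod, Fintype.card_fin, Module.finrank_self,
      mul_one]
    ring
  have hbspan : Submodule.span ℂ (Set.range b) = ⊤ := by
    have hB := coe_basisOfLinearIndependentOfCardEqFinrank li hcard
    rw [← hB]
    exact (basisOfLinearIndependentOfCardEqFinrank li hcard).span_eq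
  rw [eq_top_iff, ← hbspan]
  apply Submodule.span_le.mpr
  rintro _ ⟨k, rfl⟩
  rcases k with _ | a
  · have h1 : b none = ∑ i, P 0 i := by rw [hsum 0]; rfl
    rw [h1]
    exact Submodule.sum_mem _ fun i _ =>
      Submodule.subset_span ⟨((0 : Fin (n + 1 + 1)), i), rfl⟩
  · have h1 : b (some a) = P a.1 a.2.castSucc - (1 / d) • 1 := rfl
    rw [h1]
    apply Submodule.sub_mem
    · exact Submodule.subset_span ⟨(a.1, a.2.castSucc), rfl⟩
    · apply Submodule.smul_mem
      rw [(hsum 0).symm]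
      exact Submodule.sum_mem _ fun i _ =>
        Submodule.subset_span ⟨((0 : Fin (n + 1 + 1)), i), rfl⟩

/-- `p_{mub,d}` is a matricially spanning quantum correlation of dimension
`d` if and only if there exist `d+1` projection-valued measures `{P_{x,i}}_{i=1}^d` in
`M_d(ℂ)` whose corresponding bases are mutually unbiased: each `P_{x,i}` is a rank-one
projection, `∑_i P_{x,i} = I_d` for every `x`, and `Tr(P_{x,i} P_{y,j}) = 1/d` whenever
`x ≠ y`. -/
theorem stmt14 (d : ℕ) :
    IsMatSpanning (Fin (d + 1) × Fin d) d (pMUB d) ↔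
      ∃ P : Fin (d + 1) → Fin d → Matrix (Fin d) (Fin d) ℂ,
        (∀ x i, (P x i).IsHermitian ∧ P x i * P x i = P x i ∧ (P x i).rank = 1) ∧
        (∀ x, ∑ i, P x i = 1) ∧
        (∀ x y i j, x ≠ y → (P x i * P y j).trace = 1 / (d : ℂ)) := by
  cases d with
  | zero =>
    haveI : Subsingleton (Matrix (Fin 0) (Fin 0) ℂ) :=
      ⟨fun a b => by ext i j; exact i.elim0⟩
    constructor
    · intro _
      exact ⟨fun _ i => i.elim0, fun x i => i.elim0,
        fun x => Subsingleton.elim _ _, fun x y i j => i.elim0⟩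
    · intro _
      refine ⟨fun _ => 1, fun x => ⟨Matrix.isHermitian_one, one_mul 1⟩, ?_, ?_⟩
      · exact Submodule.eq_top_iff'.mpr fun x => by
          rw [Subsingleton.elim x 0]; exact Submodule.zero_mem _
      · intro x y
        exact x.2.elim0
  | succ n =>
    constructor
    · rintro ⟨P, hproj, hspan, hp⟩
      obtain ⟨h1, h2, h3⟩ := forward_dir P hproj hp
      exact ⟨fun x i => P (x, i), h1, h2, h3⟩
    · rintro ⟨P, h1, hsum, hcross⟩
      obtain ⟨htr, horth⟩ := backward_facts P h1 hsum
      have hii : ∀ x i, (P x i * P x i).trace = 1 := fun x i => by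
        rw [(h1 x i).2.1, htr]
      refine ⟨fun a => P a.1 a.2, fun a => ⟨(h1 a.1 a.2).1, (h1 a.1 a.2).2.1⟩,
        span_top P htr hsum horth hii hcross, ?_⟩
      intro a b
      by_cases hab : a = b
      · subst hab
        simp only [pMUB, eq_self_iff_true, if_true]
        rw [hii, mul_one]
      · by_cases hfst : a.1 = b.1
        · have hsnd : a.2 ≠ b.2 := fun h =>
            hab (Prod.ext hfst h)
          have h0 : (P a.1 a.2 * P b.1 b.2).trace = 0 := by
            rw [← hfst]
            exact horth a.1 a.2 b.2 hsnd
          simp only [pMUB, if_neg hab, if_pos hfst]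
          rw [h0, mul_zero]
        · simp only [pMUB, if_neg hab, if_neg hfst]
          rw [hcross a.1 b.1 a.2 b.2 hfst, pow_two, div_mul_div_comm, one_mul]
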